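/- Let p be a prime, S a group, and R a normal subgroup of S with R ≤ S^{(2)}. If R^{(n,S)} ∩ S^{(n+2)} ≤ R^{(n+1,S)} for all n ≥ 1, then R^{(n,S)} = R ∩ S^{(n+1)} for all n ≥ 1. -/

import Mathlib

open scoped commutatorElement

/-- The subgroup generated by all `p`-th powers of elements of `H` together with all
commutators `⁅h, g⁆ = h * g * h⁻¹ * g⁻¹` with `h ∈ H` and `g` in the ambient group. -/
def pStep (p : ℕ) {G : Type*} [Group G] (H : Subgroup G) : Subgroup G :=
  Subgroup.closure ({x : G | ∃ h ∈ H, x = h ^ p} ∪ {x : G | ∃ h ∈ H, ∃ g : G, x = ⁅h, g⁆})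

/-- `pSeries p H n` is the filtration `H^{(n,G)}`: `H^{(1,G)} = H` and
`H^{(n+1,G)} = (H^{(n,G)})^p [H^{(n,G)}, G]`.  Taking `H = ⊤` gives the lower
`p`-central series `G^{(n)}` of `G` (with `G^{(1)} = G`). -/
def pSeries (p : ℕ) {G : Type*} [Group G] (H : Subgroup G) : ℕ → Subgroup G
  | 0 => H
  | 1 => H
  | (n + 2) => pStep p (pSeries p H (n + 1))

lemma pStep_mono (p : ℕ) {G : Type*} [Group G] {H K : Subgroup G} (h : H ≤ K) :
    pStep p H ≤ pStep p K := by
  apply Subgroup.closure_mono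
  rintro x (⟨a, ha, rfl⟩ | ⟨a, ha, g, rfl⟩)
  · exact Or.inl ⟨a, h ha, rfl⟩
  · exact Or.inr ⟨a, h ha, g, rfl⟩

lemma pStep_le (p : ℕ) {G : Type*} [Group G] (H : Subgroup G) [hH : H.Normal] :
    pStep p H ≤ H := by
  apply (Subgroup.closure_le _).2
  rintro x (⟨a, ha, rfl⟩ | ⟨a, ha, g, rfl⟩)
  · exact pow_mem ha p
  · rw [commutatorElement_def]
    have : a * g * a⁻¹ * g⁻¹ = a * (g * a⁻¹ * g⁻¹) := by group
    rw [this]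
    exact mul_mem ha (hH.conj_mem _ (inv_mem ha) g)

lemma pStep_normal (p : ℕ) {G : Type*} [Group G] (H : Subgroup G) [hH : H.Normal] :
    (pStep p H).Normal := by
  constructor
  intro n hn g
  induction hn using Subgroup.closure_induction with
  | mem x hx =>
    apply Subgroup.subset_closure
    rcases hx with ⟨a, ha, rfl⟩ | ⟨a, ha, k, rfl⟩
    · refine Or.inl ⟨g * a * g⁻¹, hH.conj_mem a ha g, ?_⟩
      rw [conj_pow]
    · refine Or.inr ⟨g * a * g⁻¹, hH.conj_mem a ha g, g * k * g⁻¹, ?_⟩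
      simp [commutatorElement_def]; group
  | one => simpa using (pStep p H).one_mem
  | mul x y _ _ hx hy =>
    have : g * (x * y) * g⁻¹ = (g * x * g⁻¹) * (g * y * g⁻¹) := by group
    rw [this]; exact mul_mem hx hy
  | inv x _ hx =>
    have : g * x⁻¹ * g⁻¹ = (g * x * g⁻¹)⁻¹ := by group
    rw [this]; exact inv_mem hx

lemma pSeries_normal (p : ℕ) {G : Type*} [Group G] (H : Subgroup G) [hH : H.Normal] :
    ∀ n, (pSeries p H n).Normal
  | 0 => hH
  | 1 => hH
  | (n + 2) => by
      have := pSeries_normal p H (n + 1)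
      exact pStep_normal p _

/-- The purely algebraic implication (B) ⇒ (A) of Theorem 3.1: if `R` is a normal
subgroup of `S` with `R ≤ S^{(2)}` and `R^{(n,S)} ∩ S^{(n+2)} ≤ R^{(n+1,S)}` for all
`n ≥ 1`, then `R^{(n,S)} = R ∩ S^{(n+1)}` for all `n ≥ 1`. -/
theorem stmt6 (p : ℕ) (hp : p.Prime) {S : Type*} [Group S] (R : Subgroup S) [R.Normal]
    (hR : R ≤ pSeries p (⊤ : Subgroup S) 2)
    (hinj : ∀ n : ℕ, 1 ≤ n →
      pSeries p R n ⊓ pSeries p (⊤ : Subgroup S) (n + 2) ≤ pSeries p R (n + 1)) :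
    ∀ n : ℕ, 1 ≤ n → pSeries p R n = R ⊓ pSeries p (⊤ : Subgroup S) (n + 1) := by
  have hTnormal : ∀ n, (pSeries p (⊤ : Subgroup S) n).Normal := pSeries_normal p ⊤
  have hRnormal : ∀ n, (pSeries p R n).Normal := pSeries_normal p R
  -- forward: pSeries p R n ≤ R
  have hRle : ∀ n, 1 ≤ n → pSeries p R n ≤ R := by
    intro n hn
    induction n with
    | zero => omega
    | succ m ih =>
      match m, ih with
      | 0, _ => exact le_refl R
      | (k+1), ih =>
        have h1 : pSeries p R (k+2) = pStep p (pSeries p R (k+1)) := rfl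
        have := hRnormal (k+1)
        calc pSeries p R (k+2) ≤ pSeries p R (k+1) := pStep_le p _
          _ ≤ R := ih (by omega)
  -- forward: pSeries p R n ≤ S^{(n+1)}
  have hRleT : ∀ n, 1 ≤ n → pSeries p R n ≤ pSeries p (⊤ : Subgroup S) (n + 1) := by
    intro n hn
    induction n with
    | zero => omega
    | succ m ih =>
      match m, ih with
      | 0, _ => exact hR
      | (k+1), ih =>
        calc pSeries p R (k+2) = pStep p (pSeries p R (k+1)) := rfl
          _ ≤ pStep p (pSeries p (⊤ : Subgroup S) (k+2)) := pStep_mono p (ih (by omega))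
          _ = pSeries p (⊤ : Subgroup S) (k+3) := rfl
  -- S^{(n+1)} ≤ S^{(n)} for n ≥ 1
  have hTdesc : ∀ n, 1 ≤ n →
      pSeries p (⊤ : Subgroup S) (n + 1) ≤ pSeries p (⊤ : Subgroup S) n := by
    intro n hn
    match n, hn with
    | 1, _ => exact le_top
    | (k+2), _ =>
      have := hTnormal (k+2)
      exact pStep_le p _
  -- reverse inclusion by induction
  have hrev : ∀ n, 1 ≤ n → R ⊓ pSeries p (⊤ : Subgroup S) (n + 1) ≤ pSeries p R n := by
    intro n hn
    induction n with
    | zero => omega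
    | succ m ih =>
      match m, ih with
      | 0, _ => exact inf_le_left
      | (k+1), ih =>
        have h1 : R ⊓ pSeries p (⊤ : Subgroup S) (k + 3) ≤ pSeries p R (k+1) := by
          refine le_trans ?_ (ih (by omega))
          exact inf_le_inf_left R (hTdesc (k+2) (by omega))
        have h2 : R ⊓ pSeries p (⊤ : Subgroup S) (k + 3)
            ≤ pSeries p R (k+1) ⊓ pSeries p (⊤ : Subgroup S) (k + 3) :=
          le_inf h1 inf_le_right
        exact le_trans h2 (hinj (k+1) (by omega))
  intro n hn
  exact le_antisymm (le_inf (hRle n hn) (hRleT n hn)) (hrev n hn)
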